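/- Let H1(t) be a strongly continuous family of bounded self-adjoint operators on H, let U(t) be unitary operators with U(0) = I such that for every x ∈ H the map t ↦ U(t)x is C¹ with i(d/dt)(U(t)x) = H1(t)U(t)x, and let P(t) be a strongly C¹ family of bounded projections. Set P̃(t) := U(t)⁻¹P(t)U(t). Then the family P̃(t) is strongly C¹ and for every t: [P̃'(t), P̃(t)] = U(t)⁻¹([P'(t), P(t)] + i[[H1(t), P(t)], P(t)])U(t). -/

import Mathlib

/-!
STATEMENT 18: Let `H1(t)` be a strongly continuous family of bounded
self-adjoint operators on `H`, let `U(t)` be unitary operators with `U(0) = I`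
such that for every `x ∈ H` the map `t ↦ U(t)x` is C¹ with
`i(d/dt)(U(t)x) = H1(t)U(t)x`, and let `P(t)` be a strongly C¹ family of
bounded projections.  Set `P̃(t) := U(t)⁻¹P(t)U(t)`.  Then the family `P̃(t)`
is strongly C¹ and for every `t`:
`[P̃'(t), P̃(t)] = U(t)⁻¹([P'(t), P(t)] + i[[H1(t), P(t)], P(t)])U(t)`.
-/


open Asymptotics Filter

section Aux
variable {H : Type*} [NormedAddCommGroup H] [NormedSpace ℂ H]

/-- Banach–Steinhaus on `Icc 0 1` from strong continuity. -/
lemma strongBound [CompleteSpace H] {B : ℝ → H →L[ℂ] H}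
    (hc : ∀ y : H, ContinuousOn (fun s => B s y) (Set.Icc (0:ℝ) 1)) :
    ∃ C, ∀ s ∈ Set.Icc (0:ℝ) 1, ‖B s‖ ≤ C := by
  obtain ⟨C', hC'⟩ := banach_steinhaus (g := fun s : Set.Icc (0:ℝ) 1 => B s)
    (fun y => by
      obtain ⟨C, hC⟩ := isCompact_Icc.exists_bound_of_continuousOn (hc y)
      exact ⟨C, fun i => hC i i.2⟩)
  exact ⟨C', fun s hs => hC' ⟨s, hs⟩⟩

/-- Strong continuity of `s ↦ B s (w s)` from uniform bound + strong continuity. -/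
lemma strongCompCont {I : Set ℝ} {B : ℝ → H →L[ℂ] H} {C : ℝ}
    (hb : ∀ s ∈ I, ‖B s‖ ≤ C)
    (hc : ∀ y : H, ContinuousOn (fun s => B s y) I)
    {w : ℝ → H} (hw : ContinuousOn w I) :
    ContinuousOn (fun s => B s (w s)) I := by
  intro t ht
  have h1 : Tendsto (fun s => B s (w s) - B s (w t)) (nhdsWithin t I) (nhds 0) := by
    apply squeeze_zero_norm' (a := fun s => C * ‖w s - w t‖)
    · filter_upwards [self_mem_nhdsWithin] with s hs
      rw [← map_sub]
      exact (B s).le_opNorm _ |>.trans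
        (mul_le_mul_of_nonneg_right (hb s hs) (norm_nonneg _))
    · have := (tendsto_sub_nhds_zero_iff.2 (hw t ht)).norm.const_mul C
      simpa using this
  have h2 : Tendsto (fun s => B s (w t)) (nhdsWithin t I) (nhds (B t (w t))) := hc (w t) t ht
  have := h1.add h2
  simpa [ContinuousWithinAt] using this

/-- Key derivative lemma: if `g t = 0`, `B` is uniformly bounded and strongly
continuous at `t`, then `s ↦ B s (g s)` has derivative `B t v`. -/
lemma strongCompDeriv0 {I : Set ℝ} {B : ℝ → H →L[ℂ] H} {C : ℝ} {t : ℝ}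
    (hb : ∀ s ∈ I, ‖B s‖ ≤ C)
    {g : ℝ → H} {v : H}
    (hg : HasDerivWithinAt g v I t) (hg0 : g t = 0)
    (hBc : ContinuousWithinAt (fun s => B s v) I t) :
    HasDerivWithinAt (fun s => B s (g s)) (B t v) I t := by
  rw [hasDerivWithinAt_iff_isLittleO] at hg ⊢
  simp only [hg0, sub_zero] at hg
  have key : (fun s => B s (g s) - B t (g t) - (s - t) • B t v)
      = fun s => B s (g s - (s - t) • v) + (s - t) • (B s v - B t v) := by
    funext s
    simp [hg0, map_sub, map_smul, smul_sub]
  rw [key]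
  have h1 : (fun s => B s (g s - (s - t) • v)) =o[nhdsWithin t I] fun s => s - t := by
    refine (IsBigO.of_bound C ?_).trans_isLittleO hg
    filter_upwards [self_mem_nhdsWithin] with s hs
    exact (B s).le_opNorm _ |>.trans
      (mul_le_mul_of_nonneg_right (hb s hs) (norm_nonneg _))
  have h2 : (fun s => (s - t) • (B s v - B t v)) =o[nhdsWithin t I] fun s => s - t := by
    have hv : (fun s => B s v - B t v) =o[nhdsWithin t I] (fun _ => (1:ℝ)) :=
      (isLittleO_one_iff ℝ).2 (by
        have := hBc.sub_const (B t v)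
        simpa using this)
    have := (isBigO_refl (fun s => s - t) (nhdsWithin t I)).smul_isLittleO hv
    simpa using this
  exact h1.add h2

/-- Product rule for a strongly differentiable operator family applied to a
differentiable vector path. -/
lemma strongCompDeriv {I : Set ℝ} {B : ℝ → H →L[ℂ] H} {D : H →L[ℂ] H} {C : ℝ} {t : ℝ}
    (hb : ∀ s ∈ I, ‖B s‖ ≤ C)
    (hB : ∀ y : H, HasDerivWithinAt (fun s => B s y) (D y) I t)
    {g : ℝ → H} {v : H}
    (hg : HasDerivWithinAt g v I t) :
    HasDerivWithinAt (fun s => B s (g s)) (D (g t) + B t v) I t := by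
  have h0 : HasDerivWithinAt (fun s => B s (g s - g t)) (B t v) I t :=
    strongCompDeriv0 hb (hg.sub_const (g t)) (by simp)
      (hB v).continuousWithinAt
  have h1 : HasDerivWithinAt (fun s => B s (g s - g t) + B s (g t))
      (B t v + D (g t)) I t := h0.add (hB (g t))
  have : (fun s => B s (g s - g t) + B s (g t)) = fun s => B s (g s) := by
    funext s; rw [← map_add]; simp
  rw [this] at h1
  simpa [add_comm] using h1

end Aux

theorem interaction_picture_projection_commutator
    {H : Type*} [NormedAddCommGroup H] [InnerProductSpace ℂ H] [CompleteSpace H]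
    [TopologicalSpace.SeparableSpace H]
    (H1 : ℝ → H →L[ℂ] H)
    (hH1sa : ∀ t ∈ Set.Icc (0:ℝ) 1, IsSelfAdjoint (H1 t))
    (hH1cont : ∀ x : H, ContinuousOn (fun t => H1 t x) (Set.Icc (0:ℝ) 1))
    (U Uinv : ℝ → H →L[ℂ] H)
    (hUunit : ∀ t ∈ Set.Icc (0:ℝ) 1,
      U t ∘L Uinv t = 1 ∧ Uinv t ∘L U t = 1 ∧ ∀ x : H, ‖U t x‖ = ‖x‖)
    (hU0 : U 0 = 1)
    -- `i (d/dt)(U(t)x) = H1(t) U(t) x`, i.e. `(d/dt)(U(t)x) = -i H1(t) U(t) x`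
    (hUeq : ∀ x : H, ∀ t ∈ Set.Icc (0:ℝ) 1,
      HasDerivWithinAt (fun s => U s x)
        ((-Complex.I) • H1 t (U t x)) (Set.Icc (0:ℝ) 1) t)
    (P P' : ℝ → H →L[ℂ] H)
    (hPidem : ∀ t ∈ Set.Icc (0:ℝ) 1, P t ∘L P t = P t)
    (hPderiv : ∀ x : H, ∀ t ∈ Set.Icc (0:ℝ) 1,
      HasDerivWithinAt (fun s => P s x) (P' t x) (Set.Icc (0:ℝ) 1) t)
    (hP'cont : ∀ x : H, ContinuousOn (fun t => P' t x) (Set.Icc (0:ℝ) 1))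
    (Ptilde : ℝ → H →L[ℂ] H)
    (hPtilde : ∀ t, Ptilde t = Uinv t ∘L P t ∘L U t) :
    ∃ Ptilde' : ℝ → H →L[ℂ] H,
      -- `P̃` is strongly C¹ with strong derivative `P̃'`
      (∀ x : H, ∀ t ∈ Set.Icc (0:ℝ) 1,
        HasDerivWithinAt (fun s => Ptilde s x) (Ptilde' t x) (Set.Icc (0:ℝ) 1) t) ∧
      (∀ x : H, ContinuousOn (fun t => Ptilde' t x) (Set.Icc (0:ℝ) 1)) ∧
      -- the commutator identity
      (∀ t ∈ Set.Icc (0:ℝ) 1,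
        Ptilde' t ∘L Ptilde t - Ptilde t ∘L Ptilde' t
          = Uinv t ∘L
              ((P' t ∘L P t - P t ∘L P' t) +
                Complex.I • ((H1 t ∘L P t - P t ∘L H1 t) ∘L P t
                  - P t ∘L (H1 t ∘L P t - P t ∘L H1 t))) ∘L U t) := by
  -- pointwise identities for the unitary family
  have hUUx : ∀ t ∈ Set.Icc (0:ℝ) 1, ∀ w : H, U t (Uinv t w) = w := by
    intro t ht w
    have := ContinuousLinearMap.ext_iff.1 (hUunit t ht).1 w
    simpa using this
  have hUinvUx : ∀ t ∈ Set.Icc (0:ℝ) 1, ∀ w : H, Uinv t (U t w) = w := by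
    intro t ht w
    have := ContinuousLinearMap.ext_iff.1 (hUunit t ht).2.1 w
    simpa using this
  have hUinvnorm : ∀ t ∈ Set.Icc (0:ℝ) 1, ∀ w : H, ‖Uinv t w‖ = ‖w‖ := by
    intro t ht w
    rw [← (hUunit t ht).2.2 (Uinv t w), hUUx t ht]
  have hUb : ∀ s ∈ Set.Icc (0:ℝ) 1, ‖U s‖ ≤ 1 := fun s hs =>
    ContinuousLinearMap.opNorm_le_bound _ zero_le_one
      (fun x => by rw [(hUunit s hs).2.2 x, one_mul])
  have hUinvb : ∀ s ∈ Set.Icc (0:ℝ) 1, ‖Uinv s‖ ≤ 1 := fun s hs =>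
    ContinuousLinearMap.opNorm_le_bound _ zero_le_one
      (fun x => by rw [hUinvnorm s hs x, one_mul])
  have hUcont : ∀ x : H, ContinuousOn (fun s => U s x) (Set.Icc (0:ℝ) 1) :=
    fun x t ht => (hUeq x t ht).continuousWithinAt
  have hPcont : ∀ x : H, ContinuousOn (fun s => P s x) (Set.Icc (0:ℝ) 1) :=
    fun x t ht => (hPderiv x t ht).continuousWithinAt
  -- strong continuity of the inverse family
  have hUinvcont : ∀ y : H, ContinuousOn (fun s => Uinv s y) (Set.Icc (0:ℝ) 1) := by
    intro y t ht
    have key : ∀ s ∈ Set.Icc (0:ℝ) 1,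
        Uinv s y - Uinv t y = Uinv s (U t (Uinv t y) - U s (Uinv t y)) := by
      intro s hs
      rw [map_sub, hUUx t ht, hUinvUx s hs]
    have h0 : Filter.Tendsto (fun s => Uinv s y - Uinv t y)
        (nhdsWithin t (Set.Icc (0:ℝ) 1)) (nhds 0) := by
      apply squeeze_zero_norm' (a := fun s => ‖U t (Uinv t y) - U s (Uinv t y)‖)
      · filter_upwards [self_mem_nhdsWithin] with s hs
        rw [key s hs, hUinvnorm s hs]
      · have := (tendsto_sub_nhds_zero_iff.2 (hUcont (Uinv t y) t ht)).norm
        simpa [norm_sub_rev] using this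
    exact tendsto_sub_nhds_zero_iff.1 h0
  -- strong derivative of the inverse family
  have hUinvDeriv : ∀ y : H, ∀ t ∈ Set.Icc (0:ℝ) 1,
      HasDerivWithinAt (fun s => Uinv s y)
        (Complex.I • Uinv t (H1 t y)) (Set.Icc (0:ℝ) 1) t := by
    intro y t ht
    have hUtz : U t (Uinv t y) = y := hUUx t ht y
    have hg : HasDerivWithinAt (fun s => y - U s (Uinv t y))
        (Complex.I • H1 t y) (Set.Icc (0:ℝ) 1) t := by
      have h := (hUeq (Uinv t y) t ht).const_sub y
      rw [hUtz] at h
      convert h using 1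
      simp
    have h0 := strongCompDeriv0 (C := 1) hUinvb hg (by simp [hUtz])
      (hUinvcont (Complex.I • H1 t y) t ht)
    have h1 := h0.const_add (Uinv t y)
    have h2 : HasDerivWithinAt (fun s => Uinv s y)
        (Uinv t (Complex.I • H1 t y)) (Set.Icc (0:ℝ) 1) t := by
      refine h1.congr ?_ ?_
      · intro s hs
        rw [map_sub, hUinvUx s hs]
        abel
      · rw [map_sub, hUinvUx t ht]
        abel
    simpa [map_smul] using h2
  -- uniform bounds via Banach–Steinhaus
  obtain ⟨CP, hCP⟩ := strongBound hPcont
  obtain ⟨CH, hCH⟩ := strongBound hH1cont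
  obtain ⟨CP', hCP'⟩ := strongBound hP'cont
  refine ⟨fun t => Uinv t ∘L
      (P' t + Complex.I • (H1 t ∘L P t - P t ∘L H1 t)) ∘L U t, ?_, ?_, ?_⟩
  · -- differentiability
    intro x t ht
    have h1 : HasDerivWithinAt (fun s => P s (U s x))
        (P' t (U t x) + P t ((-Complex.I) • H1 t (U t x))) (Set.Icc (0:ℝ) 1) t :=
      strongCompDeriv hCP (fun y => hPderiv y t ht) (hUeq x t ht)
    have h2 : HasDerivWithinAt (fun s => Uinv s (P s (U s x)))
        ((Complex.I • (Uinv t ∘L H1 t)) (P t (U t x)) +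
          Uinv t (P' t (U t x) + P t ((-Complex.I) • H1 t (U t x))))
        (Set.Icc (0:ℝ) 1) t :=
      strongCompDeriv hUinvb
        (fun y => by simpa using hUinvDeriv y t ht) h1
    have hfun : (fun s => Ptilde s x) = fun s => Uinv s (P s (U s x)) := by
      funext s; rw [hPtilde]; rfl
    have hval : (Uinv t ∘L
        (P' t + Complex.I • (H1 t ∘L P t - P t ∘L H1 t)) ∘L U t) x
        = (Complex.I • (Uinv t ∘L H1 t)) (P t (U t x)) +
          Uinv t (P' t (U t x) + P t ((-Complex.I) • H1 t (U t x))) := by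
      simp only [ContinuousLinearMap.comp_apply, ContinuousLinearMap.add_apply,
        ContinuousLinearMap.smul_apply, ContinuousLinearMap.coe_sub',
        Pi.sub_apply, map_add, map_sub, map_smul]
      module
    rw [hfun, hval]
    exact h2
  · -- continuity of the derivative
    intro x
    have hw : (fun t => (Uinv t ∘L
        (P' t + Complex.I • (H1 t ∘L P t - P t ∘L H1 t)) ∘L U t) x)
        = fun t => Uinv t (P' t (U t x) +
            Complex.I • (H1 t (P t (U t x)) - P t (H1 t (U t x)))) := by
      funext t
      simp [ContinuousLinearMap.comp_apply, ContinuousLinearMap.add_apply,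
        ContinuousLinearMap.smul_apply, ContinuousLinearMap.coe_sub',
        Pi.sub_apply]
    rw [hw]
    apply strongCompCont hUinvb hUinvcont
    apply ContinuousOn.add
    · exact strongCompCont hCP' hP'cont (hUcont x)
    · exact ((strongCompCont hCH hH1cont (strongCompCont hCP hPcont (hUcont x))).sub
        (strongCompCont hCP hPcont (strongCompCont hCH hH1cont (hUcont x)))).const_smul
        Complex.I
  · -- the commutator identity
    intro t ht
    rw [hPtilde]
    ext x
    simp only [ContinuousLinearMap.comp_apply, ContinuousLinearMap.sub_apply,
      ContinuousLinearMap.add_apply, ContinuousLinearMap.smul_apply,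
      ContinuousLinearMap.coe_sub', Pi.sub_apply, map_add, map_sub, map_smul,
      ContinuousLinearMap.coe_smul', Pi.smul_apply]
    simp only [hUUx t ht, map_add, map_sub, map_smul]
    module
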